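/- For n ≥ 1, the number of overpartitions π of n that contain at least one overlined part and for which the number of non-overlined parts of size ≥ the smallest overlined part is even, minus the number of such overpartitions for which that count is odd, equals p^o(n) - p^e(n), where p^o(n) (resp. p^e(n)) is the number of partitions of n whose largest part appears an odd (resp. even) number of times. -/

import Mathlib

open scoped Classical

/-- An overpartition of `n`: a finite set of overlined part sizes (the first
occurrence of a size may be overlined, so overlined parts are distinct)
together with a multiset of non-overlined parts, all parts positive,
with total sum `n`. -/
structure Overpartition (n : ℕ) where
  overl : Finset ℕ
  plain : Multiset ℕ
  over_pos : ∀ x ∈ overl, 0 < x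
  plain_pos : ∀ x ∈ plain, 0 < x
  sum_eq : (∑ x ∈ overl, x) + plain.sum = n

namespace OPaux

variable {n : ℕ}

theorem opext {π σ : Overpartition n} (h1 : π.overl = σ.overl) (h2 : π.plain = σ.plain) :
    π = σ := by
  cases π; cases σ; simp_all

noncomputable instance : Finite (Overpartition n) := by
  let f : Overpartition n →
      ↥((Finset.range (n + 1)).powerset) × (Σ m : Fin (n + 1), Nat.Partition m) := fun π =>
    (⟨π.overl, by
        rw [Finset.mem_powerset]
        intro x hx
        rw [Finset.mem_range]
        have h1 : x ≤ ∑ y ∈ π.overl, y :=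
          Finset.single_le_sum (f := fun i => i) (fun i _ => Nat.zero_le i) hx
        have h2 := π.sum_eq
        omega⟩,
      ⟨⟨π.plain.sum, by have := π.sum_eq; omega⟩, ⟨π.plain, fun hx => π.plain_pos _ hx, rfl⟩⟩)
  apply Finite.of_injective f
  intro π σ h
  apply opext
  · exact congrArg (fun z => (z.1 : Finset ℕ)) h
  · exact congrArg (fun z => z.2.2.parts) h

/-- The number of plain parts at least as large as some overlined part. -/
noncomputable def ell (π : Overpartition n) : ℕ :=
  Multiset.card (π.plain.filter (fun x => ∃ y ∈ π.overl, y ≤ x))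

lemma ell_eq (π : Overpartition n) (h : π.overl.Nonempty) :
    ell π = Multiset.card (π.plain.filter (fun x => π.overl.min' h ≤ x)) := by
  unfold ell
  congr 1
  apply Multiset.filter_congr
  intro x _
  constructor
  · rintro ⟨y, hy, hyx⟩
    exact le_trans (Finset.min'_le _ _ hy) hyx
  · intro hx
    exact ⟨_, Finset.min'_mem _ h, hx⟩

/-- The "movable" elements: overlined parts other than the smallest one, together with
plain parts strictly larger than the smallest overlined part. -/
noncomputable def mov (π : Overpartition n) : Finset ℕ :=
  if h : π.overl.Nonempty then
    (π.overl.erase (π.overl.min' h)) ∪ (π.plain.filter (fun x => π.overl.min' h < x)).toFinset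
  else ∅

lemma over_nonempty_of_mov {π : Overpartition n} (h : (mov π).Nonempty) : π.overl.Nonempty := by
  by_contra h'
  unfold mov at h
  rw [dif_neg h'] at h
  exact Finset.not_nonempty_empty h

lemma mem_mov_iff {π : Overpartition n} (hov : π.overl.Nonempty) {t : ℕ} :
    t ∈ mov π ↔ π.overl.min' hov < t ∧ (t ∈ π.overl ∨ t ∈ π.plain) := by
  unfold mov
  rw [dif_pos hov, Finset.mem_union, Finset.mem_erase, Multiset.mem_toFinset,
    Multiset.mem_filter]
  constructor
  · rintro (⟨hne, hmem⟩ | ⟨hmem, hlt⟩)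
    · exact ⟨lt_of_le_of_ne (Finset.min'_le _ _ hmem) (Ne.symm hne), Or.inl hmem⟩
    · exact ⟨hlt, Or.inr hmem⟩
  · rintro ⟨hlt, hmem | hmem⟩
    · exact Or.inl ⟨Ne.symm (ne_of_lt hlt), hmem⟩
    · exact Or.inr ⟨hmem, hlt⟩

/-- Move an overlined part to plain status. -/
noncomputable def toPlain (π : Overpartition n) (t : ℕ) (ht : t ∈ π.overl) : Overpartition n :=
  ⟨π.overl.erase t, t ::ₘ π.plain,
    fun x hx => π.over_pos _ (Finset.mem_of_mem_erase hx),
    fun x hx => by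
      rcases Multiset.mem_cons.mp hx with rfl | hx
      · exact π.over_pos _ ht
      · exact π.plain_pos _ hx,
    by
      have h1 : t + ∑ x ∈ π.overl.erase t, x = ∑ x ∈ π.overl, x :=
        Finset.add_sum_erase π.overl (fun i => i) ht
      have h2 := π.sum_eq
      rw [Multiset.sum_cons]
      omega⟩

/-- Move a plain part to overlined status. -/
noncomputable def toOver (π : Overpartition n) (t : ℕ) (htp : t ∈ π.plain)
    (ht : t ∉ π.overl) : Overpartition n :=
  ⟨insert t π.overl, π.plain.erase t,
    fun x hx => by
      rcases Finset.mem_insert.mp hx with rfl | hx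
      · exact π.plain_pos _ htp
      · exact π.over_pos _ hx,
    fun x hx => π.plain_pos _ (Multiset.mem_of_mem_erase hx),
    by
      have h1 : (t ::ₘ π.plain.erase t).sum = π.plain.sum := by
        rw [Multiset.cons_erase htp]
      rw [Multiset.sum_cons] at h1
      have h2 := π.sum_eq
      rw [Finset.sum_insert ht]
      omega⟩

/-- The sign-reversing involution. -/
noncomputable def flip (π : Overpartition n) : Overpartition n :=
  if h : (mov π).Nonempty then
    if ht : (mov π).max' h ∈ π.overl then toPlain π ((mov π).max' h) ht
    else
      toOver π ((mov π).max' h)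
        ((((mem_mov_iff (over_nonempty_of_mov h)).mp (Finset.max'_mem _ h)).2).resolve_left ht) ht
  else π

lemma flip_main {π : Overpartition n} (hm : (mov π).Nonempty) :
    (mov (flip π)).Nonempty ∧ flip (flip π) = π ∧ (ell (flip π) + ell π) % 2 = 1 := by
  have hov := over_nonempty_of_mov hm
  set s := π.overl.min' hov with hs
  set t := (mov π).max' hm with htdef
  have htm : t ∈ mov π := Finset.max'_mem _ hm
  have hst : s < t := ((mem_mov_iff hov).mp htm).1
  have hub : ∀ u ∈ mov π, u ≤ t := fun u hu => Finset.le_max' _ _ hu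
  by_cases ht : t ∈ π.overl
  · -- case A : the largest movable part is overlined; make it plain
    have hd : flip π = toPlain π t ht := by
      unfold flip
      rw [dif_pos hm, dif_pos ht]
    set π' := toPlain π t ht with hπ'
    have e_over : π'.overl = π.overl.erase t := rfl
    have e_plain : π'.plain = t ::ₘ π.plain := rfl
    have hs_mem : s ∈ π'.overl := by
      rw [e_over]
      exact Finset.mem_erase.mpr ⟨ne_of_lt hst, Finset.min'_mem _ hov⟩
    have hov' : π'.overl.Nonempty := ⟨s, hs_mem⟩
    have hmin' : π'.overl.min' hov' = s :=
      le_antisymm (Finset.min'_le _ _ hs_mem)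
        (Finset.le_min' _ _ _ (fun y hy =>
          Finset.min'_le _ _ (Finset.mem_of_mem_erase (e_over ▸ hy))))
    have htm' : t ∈ mov π' := by
      rw [mem_mov_iff hov', hmin']
      exact ⟨hst, Or.inr (by rw [e_plain]; exact Multiset.mem_cons_self _ _)⟩
    have hm' : (mov π').Nonempty := ⟨t, htm'⟩
    have hub' : ∀ u ∈ mov π', u ≤ t := by
      intro u hu
      rw [mem_mov_iff hov', hmin'] at hu
      rcases hu with ⟨hsu, hu | hu⟩
      · exact hub u ((mem_mov_iff hov).mpr ⟨hsu, Or.inl (Finset.mem_of_mem_erase (e_over ▸ hu))⟩)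
      · rw [e_plain, Multiset.mem_cons] at hu
        rcases hu with rfl | hu
        · exact le_rfl
        · exact hub u ((mem_mov_iff hov).mpr ⟨hsu, Or.inr hu⟩)
    have hmax' : (mov π').max' hm' = t :=
      le_antisymm (Finset.max'_le _ _ _ hub') (Finset.le_max' _ _ htm')
    have ht' : (mov π').max' hm' ∉ π'.overl := by
      rw [hmax', e_over]
      exact Finset.notMem_erase _ _
    refine ⟨?_, ?_, ?_⟩
    · rw [hd]; exact hm'
    · rw [hd]
      unfold flip
      rw [dif_pos hm', dif_neg ht']
      apply opext
      · show insert ((mov π').max' hm') π'.overl = π.overl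
        rw [hmax', e_over]
        exact Finset.insert_erase ht
      · show π'.plain.erase ((mov π').max' hm') = π.plain
        rw [hmax', e_plain]
        exact Multiset.erase_cons_head _ _
    · rw [hd, ell_eq π' hov', ell_eq π hov, hmin', e_plain, ← hs,
        Multiset.filter_cons_of_pos (p := fun x => s ≤ x) _ (le_of_lt hst), Multiset.card_cons]
      omega
  · -- case B : the largest movable part is plain; overline it
    have ht_pl : t ∈ π.plain := (((mem_mov_iff hov).mp htm).2).resolve_left ht
    have hd : flip π = toOver π t ht_pl ht := by
      unfold flip
      rw [dif_pos hm, dif_neg ht]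
    set π' := toOver π t ht_pl ht with hπ'
    have e_over : π'.overl = insert t π.overl := rfl
    have e_plain : π'.plain = π.plain.erase t := rfl
    have hov' : π'.overl.Nonempty := ⟨t, by rw [e_over]; exact Finset.mem_insert_self _ _⟩
    have hmin' : π'.overl.min' hov' = s := by
      apply le_antisymm
      · refine Finset.min'_le _ _ ?_
        rw [e_over]
        exact Finset.mem_insert_of_mem (Finset.min'_mem _ hov)
      · apply Finset.le_min'
        intro y hy
        rw [e_over] at hy
        rcases Finset.mem_insert.mp hy with rfl | hy
        · exact le_of_lt hst
        · exact Finset.min'_le _ _ hy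
    have htm' : t ∈ mov π' := by
      rw [mem_mov_iff hov', hmin']
      exact ⟨hst, Or.inl (by rw [e_over]; exact Finset.mem_insert_self _ _)⟩
    have hm' : (mov π').Nonempty := ⟨t, htm'⟩
    have hub' : ∀ u ∈ mov π', u ≤ t := by
      intro u hu
      rw [mem_mov_iff hov', hmin'] at hu
      rcases hu with ⟨hsu, hu | hu⟩
      · rw [e_over] at hu
        rcases Finset.mem_insert.mp hu with rfl | hu
        · exact le_rfl
        · exact hub u ((mem_mov_iff hov).mpr ⟨hsu, Or.inl hu⟩)
      · rw [e_plain] at hu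
        exact hub u ((mem_mov_iff hov).mpr ⟨hsu, Or.inr (Multiset.mem_of_mem_erase hu)⟩)
    have hmax' : (mov π').max' hm' = t :=
      le_antisymm (Finset.max'_le _ _ _ hub') (Finset.le_max' _ _ htm')
    have ht' : (mov π').max' hm' ∈ π'.overl := by
      rw [hmax', e_over]
      exact Finset.mem_insert_self _ _
    refine ⟨?_, ?_, ?_⟩
    · rw [hd]; exact hm'
    · rw [hd]
      unfold flip
      rw [dif_pos hm', dif_pos ht']
      apply opext
      · show π'.overl.erase ((mov π').max' hm') = π.overl
        rw [hmax', e_over]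
        exact Finset.erase_insert ht
      · show ((mov π').max' hm') ::ₘ π'.plain = π.plain
        rw [hmax', e_plain]
        exact Multiset.cons_erase ht_pl
    · have hpe : π.plain = t ::ₘ π'.plain := by
        rw [e_plain]
        exact (Multiset.cons_erase ht_pl).symm
      rw [hd, ell_eq π' hov', ell_eq π hov, hmin', ← hs, hpe,
        Multiset.filter_cons_of_pos (p := fun x => s ≤ x) _ (le_of_lt hst), Multiset.card_cons]
      omega

/-- Structure of fixed points: a single overlined part which bounds all plain parts. -/
lemma fix_spec {π : Overpartition n} (hov : π.overl.Nonempty) (hf : ¬ (mov π).Nonempty) :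
    π.overl = {π.overl.min' hov} ∧ ∀ x ∈ π.plain, x ≤ π.overl.min' hov := by
  constructor
  · apply Finset.eq_singleton_iff_unique_mem.mpr
    refine ⟨Finset.min'_mem _ hov, ?_⟩
    intro y hy
    by_contra hne
    exact hf ⟨y, (mem_mov_iff hov).mpr
      ⟨lt_of_le_of_ne (Finset.min'_le _ _ hy) (Ne.symm hne), Or.inl hy⟩⟩
  · intro x hx
    by_contra hgt
    push_neg at hgt
    exact hf ⟨x, (mem_mov_iff hov).mpr ⟨hgt, Or.inr hx⟩⟩

lemma sup_mem {M : Multiset ℕ} (h : M ≠ 0) : M.sup ∈ M := by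
  induction M using Multiset.induction with
  | empty => simp at h
  | cons a M ih =>
    rw [Multiset.sup_cons]
    by_cases hM : M = 0
    · subst hM
      simp
    · rcases le_total a M.sup with h1 | h1
      · rw [sup_eq_right.mpr h1]
        exact Multiset.mem_cons_of_mem (ih hM)
      · rw [sup_eq_left.mpr h1]
        exact Multiset.mem_cons_self _ _

lemma parts_sup_mem (hn : 1 ≤ n) (p : n.Partition) : p.parts.sup ∈ p.parts := by
  apply sup_mem
  intro h0
  have := p.parts_sum
  rw [h0] at this
  simp at this
  omega

/-- Fixed point to partition: merge the unique overlined part into the plain parts. -/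
noncomputable def fixToPart (π : Overpartition n) (hov : π.overl.Nonempty)
    (hf : ¬ (mov π).Nonempty) : n.Partition :=
  ⟨π.overl.min' hov ::ₘ π.plain,
    by
      intro i hi
      rcases Multiset.mem_cons.mp hi with rfl | hi
      · exact π.over_pos _ (Finset.min'_mem _ hov)
      · exact π.plain_pos _ hi,
    by
      have h1 := π.sum_eq
      rw [(fix_spec hov hf).1, Finset.sum_singleton] at h1
      rw [Multiset.sum_cons]
      exact h1⟩

/-- Partition to fixed point: overline one copy of the largest part. -/
noncomputable def partToFix (hn : 1 ≤ n) (p : n.Partition) : Overpartition n :=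
  ⟨{p.parts.sup}, p.parts.erase p.parts.sup,
    fun x hx => by
      rw [Finset.mem_singleton] at hx
      subst hx
      exact p.parts_pos (parts_sup_mem hn p),
    fun x hx => p.parts_pos (Multiset.mem_of_mem_erase hx),
    by
      have h1 : (p.parts.sup ::ₘ p.parts.erase p.parts.sup).sum = p.parts.sum := by
        rw [Multiset.cons_erase (parts_sup_mem hn p)]
      rw [Multiset.sum_cons] at h1
      have h2 := p.parts_sum
      rw [Finset.sum_singleton]
      omega⟩

lemma partToFix_over (hn : 1 ≤ n) (p : n.Partition) :
    (partToFix hn p).overl = {p.parts.sup} := rfl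

lemma partToFix_plain (hn : 1 ≤ n) (p : n.Partition) :
    (partToFix hn p).plain = p.parts.erase p.parts.sup := rfl

lemma partToFix_ne (hn : 1 ≤ n) (p : n.Partition) : (partToFix hn p).overl.Nonempty := by
  rw [partToFix_over]
  exact Finset.singleton_nonempty _

lemma partToFix_min (hn : 1 ≤ n) (p : n.Partition) (hov : (partToFix hn p).overl.Nonempty) :
    (partToFix hn p).overl.min' hov = p.parts.sup := by
  apply le_antisymm
  · exact Finset.min'_le _ _ (by rw [partToFix_over]; exact Finset.mem_singleton_self _)
  · apply Finset.le_min'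
    intro y hy
    rw [partToFix_over, Finset.mem_singleton] at hy
    omega

lemma partToFix_nofix (hn : 1 ≤ n) (p : n.Partition) : ¬ (mov (partToFix hn p)).Nonempty := by
  rintro ⟨u, hu⟩
  have hov := partToFix_ne hn p
  rw [mem_mov_iff hov, partToFix_min hn p hov] at hu
  rcases hu with ⟨hlt, hmem | hmem⟩
  · rw [partToFix_over, Finset.mem_singleton] at hmem
    omega
  · rw [partToFix_plain] at hmem
    have : u ≤ p.parts.sup := Multiset.le_sup (Multiset.mem_of_mem_erase hmem)
    omega

lemma fixToPart_parts (π : Overpartition n) (hov : π.overl.Nonempty) (hf : ¬ (mov π).Nonempty) :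
    (fixToPart π hov hf).parts = π.overl.min' hov ::ₘ π.plain := rfl

lemma fixToPart_sup (π : Overpartition n) (hov : π.overl.Nonempty) (hf : ¬ (mov π).Nonempty) :
    (fixToPart π hov hf).parts.sup = π.overl.min' hov := by
  rw [fixToPart_parts]
  apply le_antisymm
  · rw [Multiset.sup_le]
    intro b hb
    rcases Multiset.mem_cons.mp hb with rfl | hb
    · exact le_rfl
    · exact (fix_spec hov hf).2 b hb
  · exact Multiset.le_sup (Multiset.mem_cons_self _ _)

lemma fixToPart_count (π : Overpartition n) (hov : π.overl.Nonempty) (hf : ¬ (mov π).Nonempty) :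
    (fixToPart π hov hf).parts.count (fixToPart π hov hf).parts.sup = ell π + 1 := by
  set s := π.overl.min' hov with hs
  rw [fixToPart_sup, fixToPart_parts, ← hs, Multiset.count_cons_self, ell_eq π hov, ← hs]
  have hle := (fix_spec hov hf).2
  rw [← hs] at hle
  have : Multiset.count s π.plain
      = Multiset.card (Multiset.filter (fun x => s ≤ x) π.plain) := by
    rw [Multiset.count_eq_card_filter_eq]
    congr 1
    apply Multiset.filter_congr
    intro x hx
    exact ⟨fun h => h ▸ le_rfl, fun h => le_antisymm h (hle x hx)⟩
  omega

/-- The bijection between fixed points and partitions. -/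
noncomputable def fixEquiv (hn : 1 ≤ n) :
    {π : Overpartition n // π.overl.Nonempty ∧ ¬ (mov π).Nonempty} ≃ n.Partition where
  toFun x := fixToPart x.1 x.2.1 x.2.2
  invFun p := ⟨partToFix hn p, partToFix_ne hn p, partToFix_nofix hn p⟩
  left_inv x := by
    obtain ⟨π, hov, hf⟩ := x
    apply Subtype.ext
    apply opext
    · rw [partToFix_over, fixToPart_sup]
      exact ((fix_spec hov hf).1).symm
    · rw [partToFix_plain, fixToPart_sup, fixToPart_parts]
      exact Multiset.erase_cons_head _ _
  right_inv p := by
    apply Nat.Partition.ext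
    rw [fixToPart_parts, partToFix_min hn p, partToFix_plain]
    exact Multiset.cons_erase (parts_sup_mem hn p)

lemma card_split {α : Type*} [Finite α] (P Q : α → Prop) :
    Nat.card {x // P x} = Nat.card {x // P x ∧ Q x} + Nat.card {x // P x ∧ ¬ Q x} := by
  rw [← Nat.card_sum]
  apply Nat.card_congr
  exact ((Equiv.sumCongr (Equiv.subtypeSubtypeEquivSubtypeInter P Q).symm
    (Equiv.subtypeSubtypeEquivSubtypeInter P (fun x => ¬ Q x)).symm).trans
    (Equiv.sumCompl _)).symm

/-- The involution pairs non-fixed even overpartitions with non-fixed odd ones. -/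
noncomputable def flipEquiv :
    {π : Overpartition n // (π.overl.Nonempty ∧ Even (ell π)) ∧ (mov π).Nonempty} ≃
    {π : Overpartition n // (π.overl.Nonempty ∧ Odd (ell π)) ∧ (mov π).Nonempty} where
  toFun x := ⟨flip x.1,
    ⟨⟨over_nonempty_of_mov (flip_main x.2.2).1, by
        have h1 := (flip_main x.2.2).2.2
        have h2 := x.2.1.2
        rw [Nat.even_iff] at h2
        rw [Nat.odd_iff]
        omega⟩, (flip_main x.2.2).1⟩⟩
  invFun x := ⟨flip x.1,
    ⟨⟨over_nonempty_of_mov (flip_main x.2.2).1, by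
        have h1 := (flip_main x.2.2).2.2
        have h2 := x.2.1.2
        rw [Nat.odd_iff] at h2
        rw [Nat.even_iff]
        omega⟩, (flip_main x.2.2).1⟩⟩
  left_inv x := Subtype.ext (by dsimp only; exact (flip_main x.2.2).2.1)
  right_inv x := Subtype.ext (by dsimp only; exact (flip_main x.2.2).2.1)

end OPaux

open OPaux in
theorem stmt_7 (n : ℕ) (hn : 1 ≤ n) :
    (Nat.card {π : Overpartition n // π.overl.Nonempty ∧
        Even (Multiset.card (π.plain.filter (fun x => ∃ y ∈ π.overl, y ≤ x)))} : ℤ) -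
      Nat.card {π : Overpartition n // π.overl.Nonempty ∧
        Odd (Multiset.card (π.plain.filter (fun x => ∃ y ∈ π.overl, y ≤ x)))} =
    (Nat.card {p : n.Partition // Odd (p.parts.count p.parts.sup)} : ℤ) -
      Nat.card {p : n.Partition // Even (p.parts.count p.parts.sup)} := by
  have h1 := card_split (fun π : Overpartition n => π.overl.Nonempty ∧ Even (ell π))
    (fun π => (mov π).Nonempty)
  have h2 := card_split (fun π : Overpartition n => π.overl.Nonempty ∧ Odd (ell π))
    (fun π => (mov π).Nonempty)
  have h3 : Nat.card {π : Overpartition n //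
        (π.overl.Nonempty ∧ Even (ell π)) ∧ (mov π).Nonempty} =
      Nat.card {π : Overpartition n //
        (π.overl.Nonempty ∧ Odd (ell π)) ∧ (mov π).Nonempty} :=
    Nat.card_congr flipEquiv
  have h4 : Nat.card {π : Overpartition n //
        (π.overl.Nonempty ∧ Even (ell π)) ∧ ¬ (mov π).Nonempty} =
      Nat.card {p : n.Partition // Odd (p.parts.count p.parts.sup)} := by
    apply Nat.card_congr
    refine ((Equiv.subtypeEquivRight (fun π => by tauto)).trans
      ((Equiv.subtypeSubtypeEquivSubtypeInter
        (fun π : Overpartition n => π.overl.Nonempty ∧ ¬ (mov π).Nonempty)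
        (fun π => Even (ell π))).symm)).trans
      (Equiv.subtypeEquiv (fixEquiv hn) (fun x => ?_))
    have he : fixEquiv hn x = fixToPart x.1 x.2.1 x.2.2 := rfl
    rw [he, fixToPart_count]
    rw [Nat.even_iff, Nat.odd_iff]
    omega
  have h5 : Nat.card {π : Overpartition n //
        (π.overl.Nonempty ∧ Odd (ell π)) ∧ ¬ (mov π).Nonempty} =
      Nat.card {p : n.Partition // Even (p.parts.count p.parts.sup)} := by
    apply Nat.card_congr
    refine ((Equiv.subtypeEquivRight (fun π => by tauto)).trans
      ((Equiv.subtypeSubtypeEquivSubtypeInter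
        (fun π : Overpartition n => π.overl.Nonempty ∧ ¬ (mov π).Nonempty)
        (fun π => Odd (ell π))).symm)).trans
      (Equiv.subtypeEquiv (fixEquiv hn) (fun x => ?_))
    have he : fixEquiv hn x = fixToPart x.1 x.2.1 x.2.2 := rfl
    rw [he, fixToPart_count]
    rw [Nat.even_iff, Nat.odd_iff]
    omega
  show (Nat.card {π : Overpartition n // π.overl.Nonempty ∧ Even (ell π)} : ℤ) -
      Nat.card {π : Overpartition n // π.overl.Nonempty ∧ Odd (ell π)} =
    (Nat.card {p : n.Partition // Odd (p.parts.count p.parts.sup)} : ℤ) -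
      Nat.card {p : n.Partition // Even (p.parts.count p.parts.sup)}
  rw [h1, h2, h3, h4, h5]
  push_cast
  ring
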